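/- Let −1 < ν < 0. Let (z_0^ν)' be the unique positive zero of I_ν', where I_ν is the modified Bessel function of the first kind, let z_1^ν be the first positive zero of J_ν, and z_1^{ν+1} the first positive zero of J_{ν+1}. Then (z_0^ν)' < z_1^ν < z_1^{ν+1}. -/

import Mathlib

open Real

noncomputable def besselJ (ν x : ℝ) : ℝ :=
  ∑' m : ℕ, (-1 : ℝ) ^ m / (m.factorial * Real.Gamma (m + ν + 1)) * (x / 2) ^ (2 * (m : ℝ) + ν)

noncomputable def besselI (ν x : ℝ) : ℝ :=
  ∑' m : ℕ, (1 : ℝ) / (m.factorial * Real.Gamma (m + ν + 1)) * (x / 2) ^ (2 * (m : ℝ) + ν)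


noncomputable def cc (ν : ℝ) (m : ℕ) : ℝ := 1 / (m.factorial * Real.Gamma (m + ν + 1))

lemma cc_pos {ν : ℝ} (hν : -1 < ν) (m : ℕ) : 0 < cc ν m := by
  have h1 : (0:ℝ) < m + ν + 1 := by
    have : (0:ℝ) ≤ m := Nat.cast_nonneg m
    linarith
  have := Real.Gamma_pos_of_pos h1
  have h2 : (0:ℝ) < m.factorial := by positivity
  unfold cc; positivity

lemma gamma_lb {ν : ℝ} (hν : -1 < ν) (k : ℕ) :
    Real.Gamma (ν + 2) * k.factorial ≤ Real.Gamma ((k:ℝ) + ν + 2) := by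
  induction k with
  | zero => simp
  | succ n ih =>
    have hpos : (0:ℝ) < (n:ℝ) + ν + 2 := by
      have : (0:ℝ) ≤ n := Nat.cast_nonneg n
      linarith
    have h1 : Real.Gamma ((n:ℝ) + 1 + ν + 2) = ((n:ℝ) + ν + 2) * Real.Gamma ((n:ℝ) + ν + 2) := by
      have := Real.Gamma_add_one (ne_of_gt hpos)
      rw [show (n:ℝ) + 1 + ν + 2 = ((n:ℝ) + ν + 2) + 1 by ring, this]
    have hg : (0:ℝ) < Real.Gamma ((n:ℝ) + ν + 2) := Real.Gamma_pos_of_pos hpos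
    have hn1 : ((n:ℝ) + 1) ≤ (n:ℝ) + ν + 2 := by linarith
    calc Real.Gamma (ν + 2) * (n+1).factorial
        = ((n:ℝ)+1) * (Real.Gamma (ν + 2) * n.factorial) := by
          rw [Nat.factorial_succ]; push_cast; ring
      _ ≤ ((n:ℝ)+1) * Real.Gamma ((n:ℝ) + ν + 2) := by
          apply mul_le_mul_of_nonneg_left ih (by positivity)
      _ ≤ ((n:ℝ) + ν + 2) * Real.Gamma ((n:ℝ) + ν + 2) :=
          mul_le_mul_of_nonneg_right hn1 hg.le
      _ = Real.Gamma ((n:ℝ) + 1 + ν + 2) := h1.symm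
      _ = Real.Gamma ((↑(n+1):ℝ) + ν + 2) := by push_cast; ring_nf

noncomputable def Ccon (ν : ℝ) : ℝ := 1 / Real.Gamma (ν + 1) + 1 / Real.Gamma (ν + 2)

lemma Ccon_pos {ν : ℝ} (hν : -1 < ν) : 0 < Ccon ν := by
  have h1 : (0:ℝ) < ν + 1 := by linarith
  have h2 : (0:ℝ) < ν + 2 := by linarith
  have := Real.Gamma_pos_of_pos h1
  have := Real.Gamma_pos_of_pos h2
  unfold Ccon; positivity

lemma cc_le {ν : ℝ} (hν : -1 < ν) (m : ℕ) : cc ν m ≤ Ccon ν / m.factorial := by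
  have hG2 : (0:ℝ) < Real.Gamma (ν + 2) := Real.Gamma_pos_of_pos (by linarith)
  have hG1 : (0:ℝ) < Real.Gamma (ν + 1) := Real.Gamma_pos_of_pos (by linarith)
  cases m with
  | zero =>
    unfold cc Ccon
    simp only [Nat.factorial_zero, Nat.cast_one, Nat.cast_zero]
    rw [div_one]
    have : (0:ℝ) + ν + 1 = ν + 1 := by ring
    rw [this, one_mul]
    have h3 : (0:ℝ) < 1 / Real.Gamma (ν + 2) := by positivity
    linarith
  | succ k =>
    have hlb := gamma_lb hν k
    have hkf : (1:ℝ) ≤ k.factorial := by exact_mod_cast Nat.one_le_iff_ne_zero.mpr k.factorial_ne_zero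
    have harg : ((k+1 : ℕ):ℝ) + ν + 1 = (k:ℝ) + ν + 2 := by push_cast; ring
    have hGpos : (0:ℝ) < Real.Gamma ((k:ℝ) + ν + 2) :=
      Real.Gamma_pos_of_pos (by have : (0:ℝ) ≤ k := Nat.cast_nonneg k; linarith)
    have hfac : (0:ℝ) < ((k+1).factorial : ℝ) := by positivity
    unfold cc
    rw [harg]
    have hden : Real.Gamma (ν+2) * ((k+1).factorial : ℝ) ≤ ((k+1).factorial : ℝ) * Real.Gamma ((k:ℝ)+ν+2) := by
      calc Real.Gamma (ν+2) * ((k+1).factorial : ℝ)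
          = Real.Gamma (ν+2) * 1 * ((k+1).factorial : ℝ) := by ring
        _ ≤ Real.Gamma (ν+2) * (k.factorial:ℝ) * ((k+1).factorial : ℝ) := by
            apply mul_le_mul_of_nonneg_right _ hfac.le
            apply mul_le_mul_of_nonneg_left hkf hG2.le
        _ ≤ Real.Gamma ((k:ℝ)+ν+2) * ((k+1).factorial : ℝ) :=
            mul_le_mul_of_nonneg_right hlb hfac.le
        _ = ((k+1).factorial : ℝ) * Real.Gamma ((k:ℝ)+ν+2) := by ring
    have h1 : (1:ℝ) / (((k+1).factorial : ℝ) * Real.Gamma ((k:ℝ)+ν+2)) ≤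
        1 / (Real.Gamma (ν+2) * ((k+1).factorial : ℝ)) := by
      apply one_div_le_one_div_of_le (by positivity) hden
    calc (1:ℝ) / (((k+1).factorial : ℝ) * Real.Gamma ((k:ℝ)+ν+2))
        ≤ 1 / (Real.Gamma (ν+2) * ((k+1).factorial : ℝ)) := h1
      _ = (1 / Real.Gamma (ν+2)) / ((k+1).factorial : ℝ) := by
          rw [div_div]
      _ ≤ Ccon ν / ((k+1).factorial : ℝ) := by
          gcongr
          have h4 : (0:ℝ) < 1/Real.Gamma (ν+1) := by positivity
          unfold Ccon; linarith
      _ = Ccon ν / (((k+1):ℕ).factorial : ℝ) := by norm_num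

set_option maxHeartbeats 1000000 in
lemma summable_master {ν : ℝ} (hν : -1 < ν) {R : ℝ} (hR : 0 ≤ R) :
    Summable (fun m : ℕ => cc ν m * (((m:ℝ)+1))^2 * R^m) := by
  refine Summable.of_nonneg_of_le (fun m => by have := cc_pos hν m; positivity)
    (fun m => ?_) ((Real.summable_pow_div_factorial (4*R)).mul_left (Ccon ν))
  ·
    have hcc := cc_le hν m
    have hm2 : ((m:ℝ)+1)^2 ≤ 4^m := by
      have h := Nat.lt_two_pow_self (n := m)
      have h' : ((m:ℝ)+1) ≤ 2^m := by exact_mod_cast h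
      calc ((m:ℝ)+1)^2 ≤ (2^m)^2 := by
            apply pow_le_pow_left₀ (by positivity) h'
        _ = 4^m := by rw [← pow_mul, mul_comm m 2, pow_mul]; norm_num
    have hccpos := (cc_pos hν m).le
    calc cc ν m * ((m:ℝ)+1)^2 * R^m ≤ (Ccon ν / m.factorial) * 4^m * R^m := by
          apply mul_le_mul_of_nonneg_right _ (by positivity)
          calc cc ν m * ((m:ℝ)+1)^2 ≤ cc ν m * 4^m := by
                apply mul_le_mul_of_nonneg_left hm2 hccpos
            _ ≤ (Ccon ν / m.factorial) * 4^m := by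
                apply mul_le_mul_of_nonneg_right hcc (by positivity)
      _ = Ccon ν * ((4*R)^m / m.factorial) := by
          rw [mul_pow]; ring

noncomputable def psum (d : ℕ → ℝ) (u : ℝ) : ℝ := ∑' m, d m * u ^ m

def Dom (d : ℕ → ℝ) : Prop := ∀ R : ℝ, 0 ≤ R → Summable (fun m : ℕ => |d m| * ((m:ℝ)+1) * R^m)

lemma Dom.summable {d : ℕ → ℝ} (hd : Dom d) (u : ℝ) : Summable (fun m => d m * u ^ m) := by
  refine Summable.of_norm_bounded (hd |u| (abs_nonneg u)) (fun m => ?_)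
  rw [norm_mul, norm_pow]
  calc ‖d m‖ * ‖u‖^m = |d m| * 1 * |u|^m := by rw [mul_one]; rfl
    _ ≤ |d m| * ((m:ℝ)+1) * |u|^m := by
        gcongr <;> first
          | exact abs_nonneg _
          | linarith [Nat.cast_nonneg (α := ℝ) m]

lemma Dom.summable_deriv {d : ℕ → ℝ} (hd : Dom d) (u : ℝ) :
    Summable (fun m : ℕ => d m * m * u ^ (m-1)) := by
  set R := max |u| 1 with hRdef
  have hR1 : (1:ℝ) ≤ R := le_max_right _ _
  have hRu : |u| ≤ R := le_max_left _ _
  refine Summable.of_norm_bounded (hd R (by linarith)) (fun m => ?_)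
  have key : |d m * m * u^(m-1)| ≤ |d m| * ((m:ℝ)+1) * R^m := by
    rw [abs_mul, abs_mul]
    have h1 : |(m:ℝ)| = (m:ℝ) := abs_of_nonneg (Nat.cast_nonneg m)
    rw [h1, abs_pow]
    have h2 : |u|^(m-1) ≤ R^m := by
      calc |u|^(m-1) ≤ R^(m-1) := pow_le_pow_left₀ (abs_nonneg u) hRu _
        _ ≤ R^m := pow_le_pow_right₀ hR1 (Nat.sub_le m 1)
    gcongr <;> first
      | exact abs_nonneg _
      | linarith [Nat.cast_nonneg (α := ℝ) m]
      | exact h2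
  exact key

lemma Dom.summable_deriv_mul {d : ℕ → ℝ} (hd : Dom d) (u : ℝ) :
    Summable (fun m : ℕ => d m * m * u ^ m) := by
  set R := max |u| 1 with hRdef
  have hR1 : (1:ℝ) ≤ R := le_max_right _ _
  have hRu : |u| ≤ R := le_max_left _ _
  refine Summable.of_norm_bounded (hd R (by linarith)) (fun m => ?_)
  rw [Real.norm_eq_abs, abs_mul, abs_mul]
  have h1 : |(m:ℝ)| = (m:ℝ) := abs_of_nonneg (Nat.cast_nonneg m)
  rw [h1, abs_pow]
  gcongr <;> first
    | exact abs_nonneg _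
    | linarith [Nat.cast_nonneg (α := ℝ) m]
    | exact pow_le_pow_left₀ (abs_nonneg u) hRu _

lemma psum_hasDerivAt {d : ℕ → ℝ} (hd : Dom d) (u : ℝ) :
    HasDerivAt (psum d) (∑' m : ℕ, d m * m * u ^ (m-1)) u := by
  set R := max (|u| + 1) 1 with hRdef
  have hR1 : (1:ℝ) ≤ R := le_max_right _ _
  have hRu : |u| < R := lt_of_lt_of_le (by linarith [abs_nonneg u]) (le_max_left _ _)
  have hball : u ∈ Metric.ball (0:ℝ) R := by
    simpa [Real.dist_eq] using hRu
  apply hasDerivAt_tsum_of_isPreconnected (u := fun m : ℕ => |d m| * ((m:ℝ)+1) * R^m)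
    (hd R (by linarith)) Metric.isOpen_ball (convex_ball (0:ℝ) R).isPreconnected
    (g' := fun m y => d m * m * y ^ (m-1)) ?_ ?_ (Metric.mem_ball_self (by linarith)) ?_ hball
  · intro n y _
    simpa [mul_assoc] using (hasDerivAt_pow n y).const_mul (d n)
  · intro n y hy
    rw [Metric.mem_ball, Real.dist_eq, sub_zero] at hy
    rw [Real.norm_eq_abs, abs_mul, abs_mul]
    have h1 : |(n:ℝ)| = (n:ℝ) := abs_of_nonneg (Nat.cast_nonneg n)
    rw [h1, abs_pow]
    have h2 : |y|^(n-1) ≤ R^n := by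
      calc |y|^(n-1) ≤ R^(n-1) := pow_le_pow_left₀ (abs_nonneg y) hy.le _
        _ ≤ R^n := pow_le_pow_right₀ hR1 (Nat.sub_le n 1)
    show |d n| * (n:ℝ) * |y|^(n-1) ≤ |d n| * ((n:ℝ)+1) * R^n
    gcongr <;> first
      | exact abs_nonneg _
      | linarith [Nat.cast_nonneg (α := ℝ) n]
      | exact h2
  · exact hd.summable 0

lemma psum_continuous {d : ℕ → ℝ} (hd : Dom d) : Continuous (psum d) :=
  continuous_iff_continuousAt.2 fun u => (psum_hasDerivAt hd u).differentiableAt.continuousAt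

lemma dom_cc {ν : ℝ} (hν : -1 < ν) : Dom (cc ν) := by
  intro R hR
  refine Summable.of_nonneg_of_le (fun m => ?_) (fun m => ?_) (summable_master hν hR)
  · have := cc_pos hν m; positivity
  · have h0 := (cc_pos hν m).le
    have h1 : |cc ν m| = cc ν m := abs_of_nonneg h0
    rw [h1]
    have hRm : (0:ℝ) ≤ R^m := by positivity
    have h2 : ((m:ℝ)+1) ≤ ((m:ℝ)+1)^2 := by nlinarith [Nat.cast_nonneg (α := ℝ) m]
    have := mul_le_mul_of_nonneg_left h2 h0
    nlinarith

lemma dom_gg {ν : ℝ} (hν : -1 < ν) (hν2 : ν < 0) : Dom (fun m => (2*(m:ℝ)+ν) * cc ν m) := by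
  intro R hR
  refine Summable.of_nonneg_of_le (fun m => ?_) (fun m => ?_)
    ((summable_master hν hR).mul_left 2)
  · positivity
  · have h0 := (cc_pos hν m).le
    have hm := Nat.cast_nonneg (α := ℝ) m
    have habs : |(2*(m:ℝ)+ν) * cc ν m| ≤ 2*((m:ℝ)+1) * cc ν m := by
      rw [abs_mul, abs_of_nonneg h0]
      apply mul_le_mul_of_nonneg_right _ h0
      rw [abs_le]; constructor <;> linarith
    have hRm : (0:ℝ) ≤ R^m := by positivity
    calc |(2*(m:ℝ)+ν) * cc ν m| * ((m:ℝ)+1) * R^m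
        ≤ (2*((m:ℝ)+1) * cc ν m) * ((m:ℝ)+1) * R^m := by
          apply mul_le_mul_of_nonneg_right _ hRm
          apply mul_le_mul_of_nonneg_right habs (by linarith)
      _ = 2 * (cc ν m * ((m:ℝ)+1)^2 * R^m) := by ring


lemma rpow_split {ν x : ℝ} (hx : 0 < x) (m : ℕ) :
    (x / 2) ^ (2 * (m : ℝ) + ν) = (x/2) ^ ν * ((x/2)^2)^m := by
  have h2 : (0:ℝ) < x/2 := by linarith
  rw [show (2 * (m : ℝ) + ν) = ν + ((2*m : ℕ) : ℝ) by push_cast; ring,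
    Real.rpow_add h2, Real.rpow_natCast, pow_mul]

lemma besselJ_eq {ν x : ℝ} (hx : 0 < x) :
    besselJ ν x = (x/2) ^ ν * psum (cc ν) (-(x/2)^2) := by
  unfold besselJ psum
  rw [← tsum_mul_left]
  apply tsum_congr
  intro m
  rw [rpow_split hx m]
  have : (-(x/2)^2)^m = (-1:ℝ)^m * ((x/2)^2)^m := by rw [neg_pow]
  rw [this]
  unfold cc
  ring

lemma besselI_eq {ν x : ℝ} (hx : 0 < x) :
    besselI ν x = (x/2) ^ ν * psum (cc ν) ((x/2)^2) := by
  unfold besselI psum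
  rw [← tsum_mul_left]
  apply tsum_congr
  intro m
  rw [rpow_split hx m]
  unfold cc
  ring

/-- identity 1: `ν * F u + 2u * F' u = G u` where `G = psum ((2m+ν) cc)` -/
lemma identity1 {ν : ℝ} (hν : -1 < ν) (u : ℝ) :
    ν * psum (cc ν) u + 2 * u * (∑' m : ℕ, cc ν m * m * u ^ (m-1))
      = psum (fun m => (2*(m:ℝ)+ν) * cc ν m) u := by
  have hs1 : Summable (fun m : ℕ => ν * (cc ν m * u ^ m)) :=
    ((dom_cc hν).summable u).mul_left ν
  have hs2 : Summable (fun m : ℕ => 2 * u * (cc ν m * m * u ^ (m-1))) :=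
    ((dom_cc hν).summable_deriv u).mul_left (2*u)
  unfold psum
  rw [← tsum_mul_left, ← tsum_mul_left, ← Summable.tsum_add hs1 hs2]
  apply tsum_congr
  intro m
  cases m with
  | zero => simp
  | succ k =>
    have : u ^ (k+1-1) = u ^ k := by norm_num
    rw [this]
    have : u ^ (k+1) = u * u^k := by ring
    rw [this]
    push_cast
    ring

/-- identity 2: `(ν+1) * F_{ν+1}(-u) - u * F_{ν+1}'(-u) = F_ν(-u)` -/
lemma identity2 {ν : ℝ} (hν₁ : -1 < ν) (hν₂ : ν < 0) (u : ℝ) :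
    (ν+1) * psum (cc (ν+1)) (-u) - u * (∑' m : ℕ, cc (ν+1) m * m * (-u) ^ (m-1))
      = psum (cc ν) (-u) := by
  have hν' : -1 < ν + 1 := by linarith
  have hs1 : Summable (fun m : ℕ => (ν+1) * (cc (ν+1) m * (-u) ^ m)) :=
    ((dom_cc hν').summable (-u)).mul_left (ν+1)
  have hs2 : Summable (fun m : ℕ => u * (cc (ν+1) m * m * (-u) ^ (m-1))) :=
    ((dom_cc hν').summable_deriv (-u)).mul_left u
  unfold psum
  rw [← tsum_mul_left, ← tsum_mul_left, ← Summable.tsum_sub hs1 hs2]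
  apply tsum_congr
  intro m
  have key : cc (ν+1) m * ((m:ℝ) + ν + 1) = cc ν m := by
    have hpos : (0:ℝ) < (m:ℝ) + ν + 1 := by
      have := Nat.cast_nonneg (α := ℝ) m; linarith
    unfold cc
    have hG : Real.Gamma ((m:ℝ) + (ν+1) + 1) = ((m:ℝ) + ν + 1) * Real.Gamma ((m:ℝ) + ν + 1) := by
      rw [show (m:ℝ) + (ν+1) + 1 = ((m:ℝ) + ν + 1) + 1 by ring, Real.Gamma_add_one hpos.ne']
    rw [hG]
    have hGpos := Real.Gamma_pos_of_pos hpos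
    have hf : (0:ℝ) < (m.factorial : ℝ) := by positivity
    field_simp
  cases m with
  | zero =>
    have h0 := key
    simp only [Nat.cast_zero, zero_add] at h0
    simp only [Nat.cast_zero, pow_zero, mul_one, mul_zero, zero_mul, sub_zero]
    linear_combination h0
  | succ k =>
    have h1 : (-u) ^ (k+1-1) = (-u) ^ k := by norm_num
    have h2 : (-u) ^ (k+1) = (-u) * (-u)^k := by ring
    rw [h1, h2]
    have h0 := key
    push_cast at h0 ⊢
    linear_combination ((-u) * (-u)^k) * h0

lemma besselI_hasDerivAt {ν x : ℝ} (hν : -1 < ν) (hx : 0 < x) :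
    HasDerivAt (besselI ν)
      (ν * (x/2)^(ν-1) * (1/2) * psum (cc ν) ((x/2)^2)
        + (x/2)^ν * ((∑' m : ℕ, cc ν m * m * ((x/2)^2) ^ (m-1)) * (x/2))) x := by
  have hx2 : (0:ℝ) < x/2 := by linarith
  have hA : HasDerivAt (fun y : ℝ => (y/2)^ν) (ν * (x/2)^(ν-1) * (1/2)) x := by
    have h1 : HasDerivAt (fun y : ℝ => y/2) (1/2) x := (hasDerivAt_id x).div_const 2
    have h2 := (Real.hasDerivAt_rpow_const (x := x/2) (p := ν) (Or.inl hx2.ne')).comp x h1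
    exact h2
  have hB : HasDerivAt (fun y : ℝ => psum (cc ν) ((y/2)^2))
      ((∑' m : ℕ, cc ν m * m * ((x/2)^2) ^ (m-1)) * (x/2)) x := by
    have h1 : HasDerivAt (fun y : ℝ => (y/2)^2) (x/2) x := by
      have h0 : HasDerivAt (fun y : ℝ => y/2) (1/2) x := (hasDerivAt_id x).div_const 2
      have := h0.pow 2
      exact this.congr_deriv (by ring)
    exact (psum_hasDerivAt (dom_cc hν) ((x/2)^2)).comp x h1
  have hprod := hA.mul hB
  have heq : besselI ν =ᶠ[nhds x] fun y => (y/2)^ν * psum (cc ν) ((y/2)^2) := by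
    filter_upwards [eventually_gt_nhds hx] with y hy
    exact besselI_eq hy
  exact hprod.congr_of_eventuallyEq heq


noncomputable def GG (ν : ℝ) : ℝ → ℝ := psum (fun m => (2*(m:ℝ)+ν) * cc ν m)

lemma deriv_besselI_zero_iff {ν x : ℝ} (hν₁ : -1 < ν) (hx : 0 < x) :
    deriv (besselI ν) x = 0 ↔ GG ν ((x/2)^2) = 0 := by
  have hx2 : (0:ℝ) < x/2 := by linarith
  have hD := besselI_hasDerivAt hν₁ hx
  set D := ν * (x/2)^(ν-1) * (1/2) * psum (cc ν) ((x/2)^2)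
        + (x/2)^ν * ((∑' m : ℕ, cc ν m * m * ((x/2)^2) ^ (m-1)) * (x/2)) with hDdef
  have hderiv : deriv (besselI ν) x = D := hD.deriv
  have hxD : x * D = (x/2)^ν * GG ν ((x/2)^2) := by
    have hsplit : (x/2)^(ν-1) * (x/2) = (x/2)^ν := by
      have h := Real.rpow_add_one hx2.ne' (ν-1)
      rw [← h]
      norm_num
    have expand : x * D = ν * ((x/2)^(ν-1) * (x/2)) * psum (cc ν) ((x/2)^2)
        + (x/2)^ν * (2 * ((x/2)^2) * (∑' m : ℕ, cc ν m * m * ((x/2)^2) ^ (m-1))) := by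
      rw [hDdef]; ring
    rw [expand, hsplit]
    rw [show ν * (x/2)^ν * psum (cc ν) ((x/2)^2)
        + (x/2)^ν * (2 * ((x/2)^2) * (∑' m : ℕ, cc ν m * m * ((x/2)^2) ^ (m-1)))
      = (x/2)^ν * (ν * psum (cc ν) ((x/2)^2)
        + 2 * ((x/2)^2) * (∑' m : ℕ, cc ν m * m * ((x/2)^2) ^ (m-1))) by ring]
    rw [identity1 hν₁]
    rfl
  have hrp : (0:ℝ) < (x/2)^ν := Real.rpow_pos_of_pos hx2 ν
  constructor
  · intro h
    rw [hderiv] at h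
    rw [h, mul_zero] at hxD
    have := hxD.symm
    rcases mul_eq_zero.1 this with h1 | h1
    · exact absurd h1 hrp.ne'
    · exact h1
  · intro h
    rw [hderiv]
    rw [h, mul_zero] at hxD
    rcases mul_eq_zero.1 hxD with h1 | h1
    · exact absurd h1 hx.ne'
    · exact h1

lemma GG_zero {ν : ℝ} (hν₁ : -1 < ν) : GG ν 0 = ν * cc ν 0 := by
  unfold GG psum
  rw [tsum_eq_single 0]
  · simp
  · intro m hm
    rcases Nat.exists_eq_succ_of_ne_zero hm with ⟨k, rfl⟩
    simp

lemma FF_zero {ν : ℝ} (hν₁ : -1 < ν) : psum (cc ν) 0 = cc ν 0 := by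
  unfold psum
  rw [tsum_eq_single 0]
  · simp
  · intro m hm
    rcases Nat.exists_eq_succ_of_ne_zero hm with ⟨k, rfl⟩
    simp

/-- sign stability by IVT -/
lemma pos_of_no_zero {g : ℝ → ℝ} (hg : Continuous g) (hg0 : 0 < g 0) {b : ℝ}
    (hne : ∀ u, 0 < u → u < b → g u ≠ 0) : ∀ u, 0 ≤ u → u < b → 0 < g u := by
  intro u hu hub
  rcases eq_or_lt_of_le hu with rfl | hu'
  · exact hg0
  by_contra hle
  push_neg at hle
  have hneq : g u ≠ 0 := hne u hu' hub
  have hlt : g u < 0 := lt_of_le_of_ne hle hneq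
  have : (0:ℝ) ∈ Set.Icc (g u) (g 0) := ⟨hlt.le, hg0.le⟩
  have hsub := intermediate_value_Icc' hu (hg.continuousOn (s := Set.Icc 0 u))
  rcases hsub this with ⟨t, ht, hgt⟩
  rcases eq_or_lt_of_le ht.1 with rfl | htpos
  · exact hg0.ne' hgt
  · exact hne t htpos (lt_of_le_of_lt ht.2 hub) hgt

lemma FFneg_pos {ν : ℝ} (hν₁ : -1 < ν) (hν₂ : ν < 0) {u : ℝ} (hu : 0 < u)
    (hG : GG ν u ≤ 0) : 0 < psum (cc ν) (-u) := by
  set a : ℕ → ℝ := fun m => cc ν m * u ^ m with ha_def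
  have hapos : ∀ m, 0 < a m := fun m => by
    have := cc_pos hν₁ m; positivity
  have hsa : Summable a := (dom_cc hν₁).summable u
  have hsma : Summable (fun m : ℕ => (m:ℝ) * a m) := by
    have := (dom_cc hν₁).summable_deriv_mul u
    exact this.congr (fun m => by simp only [ha_def]; ring)
  -- G = 2 * ∑ m a_m + ν * ∑ a_m
  have hGsplit : GG ν u = 2 * (∑' m : ℕ, (m:ℝ) * a m) + ν * (∑' m : ℕ, a m) := by
    unfold GG psum
    rw [← tsum_mul_left, ← tsum_mul_left, ← Summable.tsum_add (hsma.mul_left 2) (hsa.mul_left ν)]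
    exact tsum_congr fun m => by simp only [ha_def]; ring
  set A := ∑' m : ℕ, a m with hA_def
  set M := ∑' m : ℕ, (m:ℝ) * a m with hM_def
  have hApos : 0 < A := Summable.tsum_pos hsa (fun m => (hapos m).le) 0 (hapos 0)
  have hM : 2 * M + ν * A ≤ 0 := by rw [← hGsplit]; exact hG
  -- tail sum
  have hsatail : Summable (fun m => a (m+1)) := (summable_nat_add_iff 1).2 hsa
  have hAsplit : A = a 0 + ∑' m : ℕ, a (m+1) := Summable.tsum_eq_zero_add hsa
  have hMge : ∑' m : ℕ, a (m+1) ≤ M := by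
    have hmtail : Summable (fun m : ℕ => ((m:ℝ)+1) * a (m+1)) := by
      have := (summable_nat_add_iff (f := fun m => (m:ℝ) * a m) 1).2 hsma
      exact this.congr (fun m => by push_cast; ring)
    have h1 : ∑' m : ℕ, a (m+1) ≤ ∑' m : ℕ, (((m:ℝ)+1) * a (m+1)) := by
      apply Summable.tsum_le_tsum _ hsatail hmtail
      intro m
      have := (hapos (m+1)).le
      nlinarith [Nat.cast_nonneg (α := ℝ) m]
    have h2 : ∑' m : ℕ, ((m:ℝ)+1) * a (m+1) = M := by
      rw [hM_def, Summable.tsum_eq_zero_add hsma]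
      push_cast
      simp
    linarith
  have htail_lt : ∑' m : ℕ, a (m+1) < a 0 := by
    -- M < A/2 since  2M ≤ -ν A < A
    have h1 : 2 * M < A := by nlinarith
    have h2 : A - a 0 ≤ M := by rw [hAsplit]; linarith [hMge]
    linarith
  -- final estimate
  have hexp : psum (cc ν) (-u) = ∑' m : ℕ, (-1:ℝ)^m * a m := by
    unfold psum
    exact tsum_congr fun m => by simp only [ha_def]; rw [neg_pow]; ring
  have hsalt : Summable (fun m => (-1:ℝ)^m * a m) := by
    refine Summable.of_norm_bounded hsa (fun m => ?_)
    rw [Real.norm_eq_abs, abs_mul, abs_pow, abs_neg, abs_one, one_pow, one_mul,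
      abs_of_nonneg (hapos m).le]
  have hsalttail : Summable (fun m => (-1:ℝ)^(m+1) * a (m+1)) :=
    (summable_nat_add_iff 1).2 hsalt
  have hsplit2 : ∑' m : ℕ, (-1:ℝ)^m * a m = a 0 + ∑' m : ℕ, (-1:ℝ)^(m+1) * a (m+1) := by
    rw [Summable.tsum_eq_zero_add hsalt]; simp
  have habs : |∑' m : ℕ, (-1:ℝ)^(m+1) * a (m+1)| ≤ ∑' m : ℕ, a (m+1) := by
    have h := norm_tsum_le_tsum_norm (f := fun m => (-1:ℝ)^(m+1) * a (m+1)) ?_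
    · rw [Real.norm_eq_abs] at h
      refine h.trans_eq (tsum_congr fun m => ?_)
      rw [Real.norm_eq_abs, abs_mul, abs_pow, abs_neg, abs_one, one_pow, one_mul,
        abs_of_nonneg (hapos (m+1)).le]
    · refine hsatail.congr (fun m => ?_)
      rw [Real.norm_eq_abs, abs_mul, abs_pow, abs_neg, abs_one, one_pow, one_mul,
        abs_of_nonneg (hapos (m+1)).le]
  rw [hexp, hsplit2]
  have := abs_le.1 habs
  linarith [this.1, htail_lt]

lemma psi_hasDerivAt {ν u : ℝ} (hν₁ : -1 < ν) (hν₂ : ν < 0) (hu : 0 < u) :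
    HasDerivAt (fun v : ℝ => v^(ν+1) * psum (cc (ν+1)) (-v))
      (u^ν * psum (cc ν) (-u)) u := by
  have hν' : -1 < ν + 1 := by linarith
  have hA : HasDerivAt (fun v : ℝ => v^(ν+1)) ((ν+1) * u^ν) u := by
    have := Real.hasDerivAt_rpow_const (x := u) (p := ν+1) (Or.inl hu.ne')
    simpa using this
  have hB : HasDerivAt (fun v : ℝ => psum (cc (ν+1)) (-v))
      ((∑' m : ℕ, cc (ν+1) m * m * (-u)^(m-1)) * (-1)) u := by
    exact (psum_hasDerivAt (dom_cc hν') (-u)).comp u (hasDerivAt_neg u)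
  have hprod := hA.mul hB
  have hval : (ν+1) * u^ν * psum (cc (ν+1)) (-u)
      + u^(ν+1) * ((∑' m : ℕ, cc (ν+1) m * m * (-u)^(m-1)) * (-1))
      = u^ν * psum (cc ν) (-u) := by
    have hu1 : u^(ν+1) = u^ν * u := Real.rpow_add_one hu.ne' ν
    rw [hu1, ← identity2 hν₁ hν₂ u]
    ring
  rw [← hval]
  exact hprod

theorem stmt18 (ν : ℝ) (hν₁ : -1 < ν) (hν₂ : ν < 0)
    (z₀ : ℝ) (hz₀p : 0 < z₀) (hz₀ : deriv (besselI ν) z₀ = 0)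
    (hz₀u : ∀ x, 0 < x → deriv (besselI ν) x = 0 → x = z₀)
    (z₁ : ℝ) (hz₁p : 0 < z₁) (hz₁ : besselJ ν z₁ = 0)
    (hz₁f : ∀ x, 0 < x → besselJ ν x = 0 → z₁ ≤ x)
    (w₁ : ℝ) (hw₁p : 0 < w₁) (hw₁ : besselJ (ν + 1) w₁ = 0)
    (hw₁f : ∀ x, 0 < x → besselJ (ν + 1) x = 0 → w₁ ≤ x) :
    z₀ < z₁ ∧ z₁ < w₁ := by
  have hν' : -1 < ν + 1 := by linarith
  set u₀ := (z₀/2)^2 with hu₀def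
  have hu₀pos : 0 < u₀ := by positivity
  -- GG ν u₀ = 0
  have hGu₀ : GG ν u₀ = 0 := (deriv_besselI_zero_iff hν₁ hz₀p).1 hz₀
  -- GG nonzero on (0,u₀)
  have hGne : ∀ u, 0 < u → u < u₀ → GG ν u ≠ 0 := by
    intro u hu huu hGu
    set x := 2 * Real.sqrt u with hxdef
    have hxpos : 0 < x := by positivity
    have hxu : (x/2)^2 = u := by
      rw [hxdef]
      rw [show 2 * Real.sqrt u / 2 = Real.sqrt u by ring]
      exact Real.sq_sqrt hu.le
    have : deriv (besselI ν) x = 0 := by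
      rw [deriv_besselI_zero_iff hν₁ hxpos, hxu]; exact hGu
    have hx_eq := hz₀u x hxpos this
    rw [hx_eq] at hxu
    rw [← hxu] at huu
    exact lt_irrefl _ huu
  -- GG continuous, GG 0 < 0, hence GG < 0 on [0, u₀)
  have hGcont : Continuous (GG ν) := psum_continuous (dom_gg hν₁ hν₂)
  have hG0 : GG ν 0 < 0 := by
    rw [GG_zero hν₁]
    have := cc_pos hν₁ 0
    nlinarith
  have hGneg : ∀ u, 0 ≤ u → u < u₀ → GG ν u < 0 := by
    intro u hu huu
    have := pos_of_no_zero (g := fun u => -(GG ν u)) (hGcont.neg) (by simpa using hG0)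
      (fun v hv hvb h => hGne v hv hvb (by linarith [neg_eq_zero.1 h])) u hu huu
    linarith
  -- besselJ ν positive on (0, z₀]
  have hJpos : ∀ x, 0 < x → x ≤ z₀ → 0 < besselJ ν x := by
    intro x hx hxz
    have hx2 : (0:ℝ) < x/2 := by linarith
    have hu : 0 < (x/2)^2 := by positivity
    have huu₀ : (x/2)^2 ≤ u₀ := by
      rw [hu₀def]
      apply pow_le_pow_left₀ (by linarith) (by linarith)
    have hGle : GG ν ((x/2)^2) ≤ 0 := by
      rcases lt_or_eq_of_le huu₀ with h | h
      · exact (hGneg _ hu.le h).le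
      · rw [h, hGu₀]
    have hF := FFneg_pos hν₁ hν₂ hu hGle
    rw [besselJ_eq hx]
    exact mul_pos (Real.rpow_pos_of_pos hx2 ν) hF
  -- z₀ < z₁
  have hpart1 : z₀ < z₁ := by
    by_contra h
    push_neg at h
    exact absurd hz₁ (hJpos z₁ hz₁p h).ne'
  refine ⟨hpart1, ?_⟩
  -- Part 2
  set u₁ := (z₁/2)^2 with hu₁def
  have hu₁pos : 0 < u₁ := by positivity
  -- F_ν(-u) > 0 on [0, u₁)
  have hFcont : Continuous (fun u : ℝ => psum (cc ν) (-u)) :=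
    (psum_continuous (dom_cc hν₁)).comp continuous_neg
  have hF0 : 0 < psum (cc ν) (-(0:ℝ)) := by
    rw [neg_zero, FF_zero hν₁]; exact cc_pos hν₁ 0
  have hFne : ∀ u, 0 < u → u < u₁ → psum (cc ν) (-u) ≠ 0 := by
    intro u hu huu hFu
    set x := 2 * Real.sqrt u with hxdef
    have hxpos : 0 < x := by positivity
    have hxu : (x/2)^2 = u := by
      rw [hxdef, show 2 * Real.sqrt u / 2 = Real.sqrt u by ring]
      exact Real.sq_sqrt hu.le
    have hJx : besselJ ν x = 0 := by
      rw [besselJ_eq hxpos, hxu, hFu, mul_zero]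
    have := hz₁f x hxpos hJx
    -- x < z₁ since u < u₁
    have hxlt : x < z₁ := by
      have : Real.sqrt u < Real.sqrt u₁ := by
        apply Real.sqrt_lt_sqrt hu.le huu
      have hs : Real.sqrt u₁ = z₁/2 := by
        rw [hu₁def]; exact Real.sqrt_sq (by linarith)
      rw [hxdef]
      rw [hs] at this
      linarith
    linarith
  have hFpos : ∀ u, 0 ≤ u → u < u₁ → 0 < psum (cc ν) (-u) :=
    pos_of_no_zero hFcont (by simpa using hF0) hFne
  -- Ψ strictly monotone on [0, u₁]
  set Ψ : ℝ → ℝ := fun v => v^(ν+1) * psum (cc (ν+1)) (-v) with hΨdef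
  have hFcont1 : Continuous (fun v : ℝ => psum (cc (ν+1)) (-v)) :=
    (psum_continuous (dom_cc hν')).comp continuous_neg
  have hΨcont : ContinuousOn Ψ (Set.Icc 0 u₁) := by
    apply ContinuousOn.mul
    · intro v _
      exact (Real.continuousAt_rpow_const v (ν+1) (Or.inr (by linarith))).continuousWithinAt
    · exact hFcont1.continuousOn
  have hΨmono : StrictMonoOn Ψ (Set.Icc 0 u₁) := by
    apply strictMonoOn_of_deriv_pos (convex_Icc 0 u₁) hΨcont
    intro v hv
    rw [interior_Icc] at hv
    have hD := psi_hasDerivAt hν₁ hν₂ hv.1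
    rw [hD.deriv]
    exact mul_pos (Real.rpow_pos_of_pos hv.1 ν) (hFpos v hv.1.le hv.2)
  have hΨ0 : Ψ 0 = 0 := by
    rw [hΨdef]
    simp only
    rw [Real.zero_rpow (by linarith : ν + 1 ≠ 0), zero_mul]
  -- besselJ (ν+1) positive on (0, z₁]
  have hJ1pos : ∀ x, 0 < x → x ≤ z₁ → 0 < besselJ (ν+1) x := by
    intro x hx hxz
    have hx2 : (0:ℝ) < x/2 := by linarith
    have hu : 0 < (x/2)^2 := by positivity
    have huu₁ : (x/2)^2 ≤ u₁ := by
      rw [hu₁def]; apply pow_le_pow_left₀ (by linarith) (by linarith)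
    have hmem : (x/2)^2 ∈ Set.Icc (0:ℝ) u₁ := ⟨hu.le, huu₁⟩
    have h0mem : (0:ℝ) ∈ Set.Icc (0:ℝ) u₁ := ⟨le_refl 0, hu₁pos.le⟩
    have := hΨmono h0mem hmem hu
    rw [hΨ0] at this
    have hΨpos : 0 < ((x/2)^2)^(ν+1) * psum (cc (ν+1)) (-(x/2)^2) := this
    have hrp : 0 < ((x/2)^2)^(ν+1) := Real.rpow_pos_of_pos hu (ν+1)
    have hF1 : 0 < psum (cc (ν+1)) (-(x/2)^2) := by
      by_contra hle
      push_neg at hle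
      nlinarith
    rw [besselJ_eq hx]
    exact mul_pos (Real.rpow_pos_of_pos hx2 (ν+1)) hF1
  by_contra h
  push_neg at h
  exact absurd hw₁ (hJ1pos w₁ hw₁p h).ne'
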